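/- arXiv:1811.11373 — 9 statements merged into one kernel-verified Lean document; each statement's English description precedes it below -/
import Mathlib

section
/- Exactness of the big-M ReLU encoding: let x, y, M be real numbers with |x| ≤ M. Then y = max 0 x if and only if there exists a real number δ with (δ = 0 or δ = 1) such that y ≥ 0, y ≥ x, y ≤ x + M·δ, and y ≤ M·(1 − δ). -/
/-- Exactness of the big-M ReLU encoding. -/
theorem bigM_relu_exact (x y M : ℝ) (hM : |x| ≤ M) :
    y = max 0 x ↔
      ∃ δ : ℝ, (δ = 0 ∨ δ = 1) ∧
        y ≥ 0 ∧ y ≥ x ∧ y ≤ x + M * δ ∧ y ≤ M * (1 - δ) := by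
  have h1 := abs_le.mp hM
  constructor
  · intro h
    rcases le_total x 0 with hx | hx
    · refine ⟨1, Or.inr rfl, ?_, ?_, ?_, ?_⟩ <;>
        simp [h, max_eq_left hx] <;> linarith [h1.1, h1.2]
    · refine ⟨0, Or.inl rfl, ?_, ?_, ?_, ?_⟩ <;>
        simp [h, max_eq_right hx] <;> linarith [h1.1, h1.2]
  · rintro ⟨δ, hδ | hδ, h0, hx, hub1, hub2⟩ <;> subst hδ <;>
      rcases le_total x 0 with hc | hc <;>
      simp_all [max_eq_left, max_eq_right] <;> linarith
end

section
/- Exactness of the big-M encoding of a fully connected ReLU layer: let W be a real m × n matrix, b : Fin m → ℝ a bias vector, x : Fin n → ℝ an input, y : Fin m → ℝ, and M a real number such that |(W.mulVec x) j + b j| ≤ M for every j. Then (for all j, y j = max 0 ((W.mulVec x) j + b j)) if and only if there exists δ : Fin m → ℝ such that for every j: (δ j = 0 or δ j = 1), y j ≥ 0, y j ≥ (W.mulVec x) j + b j, y j ≤ (W.mulVec x) j + b j + M·(δ j), and y j ≤ M·(1 − δ j). -/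
/-- Exactness of the big-M encoding of a fully connected ReLU layer. -/
theorem bigM_fc_layer_exact (m n : ℕ) (W : Matrix (Fin m) (Fin n) ℝ)
    (b : Fin m → ℝ) (x : Fin n → ℝ) (y : Fin m → ℝ) (M : ℝ)
    (hM : ∀ j, |W.mulVec x j + b j| ≤ M) :
    (∀ j, y j = max 0 (W.mulVec x j + b j)) ↔
      ∃ δ : Fin m → ℝ, ∀ j,
        (δ j = 0 ∨ δ j = 1) ∧
        y j ≥ 0 ∧
        y j ≥ W.mulVec x j + b j ∧
        y j ≤ W.mulVec x j + b j + M * δ j ∧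
        y j ≤ M * (1 - δ j) := by
  constructor
  · intro h
    refine ⟨fun j => if W.mulVec x j + b j ≤ 0 then 1 else 0, fun j => ?_⟩
    have hMj := hM j
    have h1 : -(W.mulVec x j + b j) ≤ M := (abs_le.mp hMj).1 |> fun h => by linarith [(abs_le.mp hMj).1]
    have h2 : W.mulVec x j + b j ≤ M := (abs_le.mp hMj).2
    rw [h j]
    by_cases hc : W.mulVec x j + b j ≤ 0
    · simp only [if_pos hc, max_eq_left hc]
      exact ⟨Or.inr trivial, le_refl 0, hc, by linarith, by linarith⟩
    · push_neg at hc
      simp only [if_neg (not_le.mpr hc), max_eq_right hc.le]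
      exact ⟨Or.inl trivial, hc.le, le_refl _, by linarith, by linarith⟩
  · rintro ⟨δ, h⟩ j
    obtain ⟨hδ, h0, hge, hle1, hle2⟩ := h j
    rcases hδ with hd | hd
    · rw [hd] at hle1
      simp at hle1
      have : y j = W.mulVec x j + b j := le_antisymm hle1 hge
      rw [this, max_eq_right (by linarith)]
    · rw [hd] at hle2
      simp at hle2
      have : y j = 0 := le_antisymm hle2 h0
      rw [this, max_eq_left (by linarith)]
end

section
/- Exactness of the big-M encoding for a composition of two fully connected ReLU layers: let W₁ be a real h × n matrix with bias b₁ : Fin h → ℝ, W₂ a real m × h matrix with bias b₂ : Fin m → ℝ, x : Fin n → ℝ, z : Fin m → ℝ, and M a real number such that |(W₁.mulVec x) j + b₁ j| ≤ M for every j and |(W₂.mulVec (fun j => max 0 ((W₁.mulVec x) j + b₁ j))) i + b₂ i| ≤ M for every i. Then z equals the composed network output (for all i, z i = max 0 ((W₂.mulVec (fun j => max 0 ((W₁.mulVec x) j + b₁ j))) i + b₂ i)) if and only if there exist y : Fin h → ℝ, δ¹ : Fin h → ℝ, δ² : Fin m → ℝ such that for every j: (δ¹ j = 0 or δ¹ j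 = 1), y j ≥ 0, y j ≥ (W₁.mulVec x) j + b₁ j, y j ≤ (W₁.mulVec x) j + b₁ j + M·(δ¹ j), y j ≤ M·(1 − δ¹ j), and for every i: (δ² i = 0 or δ² i = 1), z i ≥ 0, z i ≥ (W₂.mulVec y) i + b₂ i, z i ≤ (W₂.mulVec y) i + b₂ i + M·(δ² i), z i ≤ M·(1 − δ² i). -/
/-- Big-M constraints force the node value to equal the ReLU output. -/
lemma bigM_node_eq (a M y δ : ℝ) (hδ : δ = 0 ∨ δ = 1)
    (h0 : y ≥ 0) (h1 : y ≥ a) (h2 : y ≤ a + M * δ) (h3 : y ≤ M * (1 - δ)) :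
    y = max 0 a := by
  rcases hδ with h | h <;> subst h
  · have : y = a := le_antisymm (by linarith) h1
    rw [this, max_eq_right (by linarith)]
  · have : y = 0 := le_antisymm (by linarith) h0
    rw [this, max_eq_left (by linarith)]

/-- The ReLU output satisfies the big-M constraints with suitable δ. -/
lemma bigM_node_sat (a M : ℝ) (hM : |a| ≤ M) :
    ∃ δ : ℝ, (δ = 0 ∨ δ = 1) ∧ max 0 a ≥ 0 ∧ max 0 a ≥ a ∧
      max 0 a ≤ a + M * δ ∧ max 0 a ≤ M * (1 - δ) := by
  obtain ⟨ha, ha'⟩ := abs_le.mp hM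
  by_cases h : 0 ≤ a
  · exact ⟨0, Or.inl rfl, le_max_left _ _, le_max_right _ _,
      by rw [max_eq_right h]; linarith, by rw [max_eq_right h]; linarith⟩
  · exact ⟨1, Or.inr rfl, le_max_left _ _, le_max_right _ _,
      by rw [max_eq_left (le_of_not_ge h)]; linarith,
      by rw [max_eq_left (le_of_not_ge h)]; linarith⟩

/-- Exactness of the big-M encoding for a composition of two fully connected
ReLU layers. -/
theorem bigM_two_layer_exact (n h m : ℕ)
    (W₁ : Matrix (Fin h) (Fin n) ℝ) (b₁ : Fin h → ℝ)
    (W₂ : Matrix (Fin m) (Fin h) ℝ) (b₂ : Fin m → ℝ)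
    (x : Fin n → ℝ) (z : Fin m → ℝ) (M : ℝ)
    (hM₁ : ∀ j, |W₁.mulVec x j + b₁ j| ≤ M)
    (hM₂ : ∀ i, |W₂.mulVec (fun j => max 0 (W₁.mulVec x j + b₁ j)) i + b₂ i| ≤ M) :
    (∀ i, z i = max 0 (W₂.mulVec (fun j => max 0 (W₁.mulVec x j + b₁ j)) i + b₂ i)) ↔
      ∃ (y : Fin h → ℝ) (δ₁ : Fin h → ℝ) (δ₂ : Fin m → ℝ),
        (∀ j,
          (δ₁ j = 0 ∨ δ₁ j = 1) ∧
          y j ≥ 0 ∧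
          y j ≥ W₁.mulVec x j + b₁ j ∧
          y j ≤ W₁.mulVec x j + b₁ j + M * δ₁ j ∧
          y j ≤ M * (1 - δ₁ j)) ∧
        (∀ i,
          (δ₂ i = 0 ∨ δ₂ i = 1) ∧
          z i ≥ 0 ∧
          z i ≥ W₂.mulVec y i + b₂ i ∧
          z i ≤ W₂.mulVec y i + b₂ i + M * δ₂ i ∧
          z i ≤ M * (1 - δ₂ i)) := by
  constructor
  · intro hz
    refine ⟨fun j => max 0 (W₁.mulVec x j + b₁ j), ?_⟩
    choose δ₁ hδ₁ using fun j => bigM_node_sat (W₁.mulVec x j + b₁ j) M (hM₁ j)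
    choose δ₂ hδ₂ using fun i =>
      bigM_node_sat (W₂.mulVec (fun j => max 0 (W₁.mulVec x j + b₁ j)) i + b₂ i) M (hM₂ i)
    refine ⟨δ₁, δ₂, fun j => hδ₁ j, fun i => ?_⟩
    have := hδ₂ i
    rw [← hz i] at this
    exact this
  · rintro ⟨y, δ₁, δ₂, h₁, h₂⟩ i
    have hy : y = fun j => max 0 (W₁.mulVec x j + b₁ j) := by
      funext j
      obtain ⟨a, b, c, d, e⟩ := h₁ j
      exact bigM_node_eq _ _ _ _ a b c d e
    obtain ⟨a, b, c, d, e⟩ := h₂ i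
    rw [hy] at c d
    exact bigM_node_eq _ _ _ _ a b c d e
end

section
/- Exactness of the two-binary-variable encoding of max-pooling over four values: let x₁, x₂, x₃, x₄, y, M be real numbers with M ≥ xᵢ − xⱼ for all i, j ∈ {1,2,3,4}. Then y = max (max x₁ x₂) (max x₃ x₄) if and only if there exist real numbers δ₁, δ₂, each equal to 0 or 1, such that y ≥ xⱼ for j = 1,2,3,4, and y ≤ x₁ + M·(δ₁ + δ₂), y ≤ x₂ + M·(1 − δ₁ + δ₂), y ≤ x₃ + M·(δ₁ + 1 − δ₂), y ≤ x₄ + M·(1 − δ₁ + 1 − δ₂). -/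
/-- Exactness of the two-binary-variable encoding of max-pooling over four
values. -/
theorem maxpool4_exact (x₁ x₂ x₃ x₄ y M : ℝ)
    (hM : ∀ a ∈ ({x₁, x₂, x₃, x₄} : Set ℝ), ∀ b ∈ ({x₁, x₂, x₃, x₄} : Set ℝ),
      M ≥ a - b) :
    y = max (max x₁ x₂) (max x₃ x₄) ↔
      ∃ δ₁ δ₂ : ℝ, (δ₁ = 0 ∨ δ₁ = 1) ∧ (δ₂ = 0 ∨ δ₂ = 1) ∧
        y ≥ x₁ ∧ y ≥ x₂ ∧ y ≥ x₃ ∧ y ≥ x₄ ∧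
        y ≤ x₁ + M * (δ₁ + δ₂) ∧
        y ≤ x₂ + M * (1 - δ₁ + δ₂) ∧
        y ≤ x₃ + M * (δ₁ + 1 - δ₂) ∧
        y ≤ x₄ + M * (1 - δ₁ + 1 - δ₂) := by
  have m1 : x₁ ∈ ({x₁, x₂, x₃, x₄} : Set ℝ) := by simp
  have m2 : x₂ ∈ ({x₁, x₂, x₃, x₄} : Set ℝ) := by simp
  have m3 : x₃ ∈ ({x₁, x₂, x₃, x₄} : Set ℝ) := by simp
  have m4 : x₄ ∈ ({x₁, x₂, x₃, x₄} : Set ℝ) := by simp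
  have h0 : (0:ℝ) ≤ M := by have := hM x₁ m1 x₁ m1; linarith
  have h12 := hM x₁ m1 x₂ m2
  have h13 := hM x₁ m1 x₃ m3
  have h14 := hM x₁ m1 x₄ m4
  have h21 := hM x₂ m2 x₁ m1
  have h23 := hM x₂ m2 x₃ m3
  have h24 := hM x₂ m2 x₄ m4
  have h31 := hM x₃ m3 x₁ m1
  have h32 := hM x₃ m3 x₂ m2
  have h34 := hM x₃ m3 x₄ m4
  have h41 := hM x₄ m4 x₁ m1
  have h42 := hM x₄ m4 x₂ m2
  have h43 := hM x₄ m4 x₃ m3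
  constructor
  · intro hy
    have hge1 : y ≥ x₁ := hy ▸ le_max_of_le_left (le_max_left _ _)
    have hge2 : y ≥ x₂ := hy ▸ le_max_of_le_left (le_max_right _ _)
    have hge3 : y ≥ x₃ := hy ▸ le_max_of_le_right (le_max_left _ _)
    have hge4 : y ≥ x₄ := hy ▸ le_max_of_le_right (le_max_right _ _)
    rcases le_total x₁ x₂ with h1 | h1 <;> rcases le_total x₃ x₄ with h2 | h2 <;>
      rcases le_total (max x₁ x₂) (max x₃ x₄) with h3 | h3
    · -- max = x₄
      rw [max_eq_right h1, max_eq_right h2] at h3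
      have hy' : y = x₄ := by
        rw [hy, max_eq_right h1, max_eq_right h2, max_eq_right h3]
      exact ⟨1, 1, Or.inr rfl, Or.inr rfl, hge1, hge2, hge3, hge4,
        by rw [hy']; norm_num <;> linarith, by rw [hy']; norm_num <;> linarith, by rw [hy']; norm_num <;> linarith, by rw [hy']; norm_num <;> linarith⟩
    · -- max = x₂
      rw [max_eq_right h1, max_eq_right h2] at h3
      have hy' : y = x₂ := by
        rw [hy, max_eq_right h1, max_eq_right h2, max_eq_left h3]
      exact ⟨1, 0, Or.inr rfl, Or.inl rfl, hge1, hge2, hge3, hge4,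
        by rw [hy']; norm_num <;> linarith, by rw [hy']; norm_num <;> linarith, by rw [hy']; norm_num <;> linarith, by rw [hy']; norm_num <;> linarith⟩
    · -- max = x₃
      rw [max_eq_right h1, max_eq_left h2] at h3
      have hy' : y = x₃ := by
        rw [hy, max_eq_right h1, max_eq_left h2, max_eq_right h3]
      exact ⟨0, 1, Or.inl rfl, Or.inr rfl, hge1, hge2, hge3, hge4,
        by rw [hy']; norm_num <;> linarith, by rw [hy']; norm_num <;> linarith, by rw [hy']; norm_num <;> linarith, by rw [hy']; norm_num <;> linarith⟩
    · -- max = x₂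
      rw [max_eq_right h1, max_eq_left h2] at h3
      have hy' : y = x₂ := by
        rw [hy, max_eq_right h1, max_eq_left h2, max_eq_left h3]
      exact ⟨1, 0, Or.inr rfl, Or.inl rfl, hge1, hge2, hge3, hge4,
        by rw [hy']; norm_num <;> linarith, by rw [hy']; norm_num <;> linarith, by rw [hy']; norm_num <;> linarith, by rw [hy']; norm_num <;> linarith⟩
    · -- max = x₄
      rw [max_eq_left h1, max_eq_right h2] at h3
      have hy' : y = x₄ := by
        rw [hy, max_eq_left h1, max_eq_right h2, max_eq_right h3]
      exact ⟨1, 1, Or.inr rfl, Or.inr rfl, hge1, hge2, hge3, hge4,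
        by rw [hy']; norm_num <;> linarith, by rw [hy']; norm_num <;> linarith, by rw [hy']; norm_num <;> linarith, by rw [hy']; norm_num <;> linarith⟩
    · -- max = x₁
      rw [max_eq_left h1, max_eq_right h2] at h3
      have hy' : y = x₁ := by
        rw [hy, max_eq_left h1, max_eq_right h2, max_eq_left h3]
      exact ⟨0, 0, Or.inl rfl, Or.inl rfl, hge1, hge2, hge3, hge4,
        by rw [hy']; norm_num <;> linarith, by rw [hy']; norm_num <;> linarith, by rw [hy']; norm_num <;> linarith, by rw [hy']; norm_num <;> linarith⟩
    · -- max = x₃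
      rw [max_eq_left h1, max_eq_left h2] at h3
      have hy' : y = x₃ := by
        rw [hy, max_eq_left h1, max_eq_left h2, max_eq_right h3]
      exact ⟨0, 1, Or.inl rfl, Or.inr rfl, hge1, hge2, hge3, hge4,
        by rw [hy']; norm_num <;> linarith, by rw [hy']; norm_num <;> linarith, by rw [hy']; norm_num <;> linarith, by rw [hy']; norm_num <;> linarith⟩
    · -- max = x₁
      rw [max_eq_left h1, max_eq_left h2] at h3
      have hy' : y = x₁ := by
        rw [hy, max_eq_left h1, max_eq_left h2, max_eq_left h3]
      exact ⟨0, 0, Or.inl rfl, Or.inl rfl, hge1, hge2, hge3, hge4,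
        by rw [hy']; norm_num <;> linarith, by rw [hy']; norm_num <;> linarith, by rw [hy']; norm_num <;> linarith, by rw [hy']; norm_num <;> linarith⟩
  · rintro ⟨δ₁, δ₂, hd1, hd2, g1, g2, g3, g4, u1, u2, u3, u4⟩
    have hub : max (max x₁ x₂) (max x₃ x₄) ≤ y := by
      simp [max_le_iff]; exact ⟨⟨g1, g2⟩, g3, g4⟩
    rcases hd1 with rfl | rfl <;> rcases hd2 with rfl | rfl
    · have : y ≤ x₁ := by linarith [u1]
      have : x₁ ≤ max (max x₁ x₂) (max x₃ x₄) := le_max_of_le_left (le_max_left _ _)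
      linarith
    · have : y ≤ x₃ := by linarith [u3]
      have : x₃ ≤ max (max x₁ x₂) (max x₃ x₄) := le_max_of_le_right (le_max_left _ _)
      linarith
    · have : y ≤ x₂ := by linarith [u2]
      have : x₂ ≤ max (max x₁ x₂) (max x₃ x₄) := le_max_of_le_left (le_max_right _ _)
      linarith
    · have : y ≤ x₄ := by linarith [u4]
      have : x₄ ≤ max (max x₁ x₂) (max x₃ x₄) := le_max_of_le_right (le_max_right _ _)
      linarith
end

section
/- Range restriction of the binary selector: let k and n be natural numbers with n ≤ 2^k, and δ : Fin k → ℝ with (δ j = 0 or δ j = 1) for every j. Writing bitⱼ(z) = 1 if Nat.testBit z j is true and 0 otherwise, the following are equivalent: (i) for every natural number z with n ≤ z and z < 2^k, the sum over j ∈ Fin k of bitⱼ(z) + (1 − 2·bitⱼ(z))·δ j is ≥ 1; (ii) the natural number represented by δ, namely Σⱼ (if δ j = 1 then 2^j else 0), is strictly less than n. -/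
open Finset

private lemma sum_pow_bound (P : ℕ → Prop) [DecidablePred P] (k : ℕ) :
    (∑ i ∈ Finset.range k, if P i then 2 ^ i else 0) < 2 ^ k := by
  induction k with
  | zero => simp
  | succ k ih =>
    rw [Finset.sum_range_succ]
    have : (if P k then 2 ^ k else 0) ≤ 2 ^ k := by split <;> omega
    have h2 : (2:ℕ) ^ (k+1) = 2 ^ k + 2 ^ k := by ring
    omega

private lemma testBit_sum_pow (P : ℕ → Prop) [DecidablePred P] (k j : ℕ) :
    Nat.testBit (∑ i ∈ Finset.range k, if P i then 2 ^ i else 0) j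
      = (decide (j < k) && decide (P j)) := by
  induction k with
  | zero => simp
  | succ k ih =>
    rw [Finset.sum_range_succ]
    by_cases hP : P k
    · simp only [hP, if_true]
      rw [Nat.add_comm, ]
      rcases lt_trichotomy j k with h | h | h
      · rw [Nat.testBit_two_pow_add_gt h, ih]
        simp [h, Nat.lt_succ_of_lt h]
      · subst h
        rw [Nat.testBit_two_pow_add_eq,
          Nat.testBit_lt_two_pow (sum_pow_bound P j)]
        simp [hP]
      · have hlt : 2 ^ k + (∑ i ∈ Finset.range k, if P i then 2 ^ i else 0) < 2 ^ j := by
          have := sum_pow_bound P k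
          have : (2:ℕ) ^ (k+1) ≤ 2 ^ j := Nat.pow_le_pow_right (by norm_num) h
          have h2 : (2:ℕ) ^ (k+1) = 2 ^ k + 2 ^ k := by ring
          have := sum_pow_bound P k
          omega
        rw [Nat.testBit_lt_two_pow hlt]
        simp [show ¬ j < k + 1 by omega]
    · simp only [hP, if_false, Nat.add_zero, ih]
      rcases lt_trichotomy j k with h | h | h
      · simp [h, Nat.lt_succ_of_lt h]
      · subst h; simp [hP]
      · simp [show ¬ j < k by omega, show ¬ j < k + 1 by omega]

/-- The `j`-th binary digit of `z` (least significant bit first), as a real. -/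
def bitR (z j : ℕ) : ℝ := if Nat.testBit z j then 1 else 0

/-- Range restriction of the binary selector. -/
theorem binary_selector_range (k n : ℕ) (hn : n ≤ 2 ^ k)
    (δ : Fin k → ℝ) (hδ : ∀ j, δ j = 0 ∨ δ j = 1) :
    (∀ z : ℕ, n ≤ z → z < 2 ^ k →
        1 ≤ ∑ j : Fin k, (bitR z j + (1 - 2 * bitR z j) * δ j)) ↔
      (∑ j : Fin k, if δ j = 1 then 2 ^ (j : ℕ) else 0) < n := by
  classical
  set P : ℕ → Prop := fun i => ∀ h : i < k, δ ⟨i, h⟩ = 1 with hP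
  set m : ℕ := ∑ j : Fin k, if δ j = 1 then 2 ^ (j : ℕ) else 0 with hm
  have hm_eq : m = ∑ i ∈ Finset.range k, if P i then 2 ^ i else 0 := by
    rw [hm, Finset.sum_range fun i => if P i then 2 ^ i else 0]
    refine Finset.sum_congr rfl fun j _ => ?_
    have : P (j : ℕ) ↔ δ j = 1 := by
      constructor
      · intro h; exact h j.isLt
      · intro h h'; simpa using h
    simp [this]
  have hm_lt : m < 2 ^ k := by rw [hm_eq]; exact sum_pow_bound P k
  have hbit : ∀ j : Fin k, Nat.testBit m (j : ℕ) = decide (δ j = 1) := by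
    intro j
    rw [hm_eq, testBit_sum_pow]
    have : P (j : ℕ) ↔ δ j = 1 := by
      constructor
      · intro h; exact h j.isLt
      · intro h h'; simpa using h
    simp [j.isLt, this]
  -- rewrite each term of the sum as a mismatch indicator
  have hterm : ∀ (z : ℕ) (j : Fin k),
      bitR z (j : ℕ) + (1 - 2 * bitR z (j : ℕ)) * δ j
        = if Nat.testBit z (j : ℕ) = decide (δ j = 1) then 0 else 1 := by
    intro z j
    rcases hδ j with h | h <;> unfold bitR <;> cases hzb : Nat.testBit z (j : ℕ) <;>
      simp [h] <;> ring
  have key : ∀ z : ℕ, z < 2 ^ k →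
      ((1 : ℝ) ≤ ∑ j : Fin k, (bitR z j + (1 - 2 * bitR z j) * δ j) ↔ z ≠ m) := by
    intro z hz
    rw [Finset.sum_congr rfl fun j _ => hterm z j]
    constructor
    · intro hsum hzm
      subst hzm
      rw [Finset.sum_congr rfl (fun j _ => by rw [hbit j, if_pos rfl]),
        Finset.sum_const] at hsum
      simp at hsum
      linarith
    · intro hzm
      have : ∃ j : Fin k, Nat.testBit z (j : ℕ) ≠ Nat.testBit m (j : ℕ) := by
        by_contra hc
        push_neg at hc
        apply hzm
        apply Nat.eq_of_testBit_eq
        intro i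
        by_cases hi : i < k
        · exact hc ⟨i, hi⟩
        · rw [Nat.testBit_lt_two_pow, Nat.testBit_lt_two_pow]
          · exact lt_of_lt_of_le hm_lt (Nat.pow_le_pow_right (by norm_num) (by omega))
          · exact lt_of_lt_of_le hz (Nat.pow_le_pow_right (by norm_num) (by omega))
      obtain ⟨j, hj⟩ := this
      rw [hbit j] at hj
      calc (1:ℝ) = if Nat.testBit z (j:ℕ) = decide (δ j = 1) then 0 else 1 := by
              rw [if_neg hj]
        _ ≤ _ := Finset.single_le_sum (f := fun j : Fin k =>
              if Nat.testBit z (j:ℕ) = decide (δ j = 1) then (0:ℝ) else 1)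
              (fun i _ => by split <;> norm_num) (Finset.mem_univ j)
  constructor
  · intro h
    by_contra hc
    push_neg at hc
    have := (key m hm_lt).mp (h m hc hm_lt)
    exact this rfl
  · intro h z hnz hzk
    exact (key z hzk).mpr (by omega)
end

section
/- Exactness of the logarithmic max-pooling encoding: let n ≥ 1 and k be natural numbers with n ≤ 2^k, x : Fin n → ℝ, y ∈ ℝ, and M ∈ ℝ with M ≥ x i − x j for all i, j. Writing bitⱼ(z) = 1 if Nat.testBit z j is true and 0 otherwise, then y is the maximum of the values x z over z : Fin n if and only if there exists δ : Fin k → ℝ with (δ j = 0 or δ j = 1) for every j such that: (i) y ≥ x z for every z : Fin n; (ii) for every z : Fin n, y ≤ x z + M · Σⱼ (bitⱼ(z) + (1 − 2·bitⱼ(z))·δ j); and (iii) for every natural number z with n ≤ z < 2^k, Σⱼ (bitⱼ(z) + (1 − 2·bitⱼ(z))·δ j) ≥ 1. -/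
/-- For any assignment of bits, there is a natural number below `2^k` with those bits. -/
lemma exists_nat_of_bits (k : ℕ) (b : Fin k → Bool) :
    ∃ z, z < 2 ^ k ∧ ∀ j : Fin k, Nat.testBit z j = b j := by
  induction k with
  | zero => exact ⟨0, by norm_num, fun j => j.elim0⟩
  | succ k ih =>
    obtain ⟨z, hz, hbit⟩ := ih (fun j => b j.succ)
    refine ⟨Nat.bit (b 0) z, ?_, ?_⟩
    · have : (b 0).toNat ≤ 1 := Bool.toNat_le _
      rw [Nat.bit_val]
      have : 2 * z + (b 0).toNat < 2 * 2 ^ k := by omega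
      simpa [pow_succ, mul_comm] using this
    · intro j
      cases j using Fin.cases with
      | zero => simpa using Nat.testBit_bit_zero (b 0) z
      | succ j =>
        have : Nat.testBit (Nat.bit (b 0) z) (j + 1) = Nat.testBit z j := by
          rw [Nat.testBit_add_one, Nat.bit_div_two]
        simpa [Fin.succ] using this.trans (hbit j)

/-- Exactness of the logarithmic max-pooling encoding. -/
theorem maxpool_log_exact (n k : ℕ) (hn : 1 ≤ n) (hnk : n ≤ 2 ^ k)
    (x : Fin n → ℝ) (y : ℝ) (M : ℝ) (hM : ∀ i j, M ≥ x i - x j) :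
    y = Finset.univ.sup' ⟨⟨0, hn⟩, Finset.mem_univ _⟩ x ↔
      ∃ δ : Fin k → ℝ, (∀ j, δ j = 0 ∨ δ j = 1) ∧
        (∀ z : Fin n, y ≥ x z) ∧
        (∀ z : Fin n,
          y ≤ x z + M * ∑ j : Fin k, (bitR (z : ℕ) j + (1 - 2 * bitR (z : ℕ) j) * δ j)) ∧
        (∀ z : ℕ, n ≤ z → z < 2 ^ k →
          1 ≤ ∑ j : Fin k, (bitR z j + (1 - 2 * bitR z j) * δ j)) := by
  classical
  have hM0 : 0 ≤ M := by simpa using hM ⟨0, hn⟩ ⟨0, hn⟩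
  -- sum of mismatch terms when δ comes from the bits of z₀
  have hterm : ∀ (z z₀ : ℕ) (j : ℕ),
      bitR z j + (1 - 2 * bitR z j) * bitR z₀ j =
        if Nat.testBit z j = Nat.testBit z₀ j then 0 else 1 := by
    intro z z₀ j
    unfold bitR
    by_cases h1 : Nat.testBit z j <;> by_cases h2 : Nat.testBit z₀ j <;>
      simp [h1, h2] <;> ring
  constructor
  · rintro rfl
    obtain ⟨z₀, -, hz₀⟩ := Finset.exists_mem_eq_sup' ⟨⟨0, hn⟩, Finset.mem_univ _⟩ x
    refine ⟨fun j => bitR (z₀ : ℕ) j, fun j => ?_, fun z => Finset.le_sup' x (Finset.mem_univ z), ?_, ?_⟩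
    · unfold bitR; by_cases h : Nat.testBit (z₀ : ℕ) j <;> simp [h]
    · intro z
      rw [hz₀]
      by_cases hzz : z = z₀
      · subst hzz
        have : ∀ j : Fin k,
            bitR (z : ℕ) j + (1 - 2 * bitR (z : ℕ) j) * bitR (z : ℕ) j = 0 := by
          intro j; rw [hterm]; simp
        simp [this]
      · -- sum ≥ 1 since some bit differs
        have hzk : (z : ℕ) < 2 ^ k := lt_of_lt_of_le z.isLt hnk
        have hz₀k : (z₀ : ℕ) < 2 ^ k := lt_of_lt_of_le z₀.isLt hnk
        have hne : ∃ j : Fin k, Nat.testBit (z : ℕ) j ≠ Nat.testBit (z₀ : ℕ) j := by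
          by_contra hc
          push_neg at hc
          apply hzz
          apply Fin.ext
          apply Nat.eq_of_testBit_eq
          intro j
          by_cases hj : j < k
          · exact hc ⟨j, hj⟩
          · rw [Nat.testBit_eq_false_of_lt (lt_of_lt_of_le hzk (Nat.pow_le_pow_right (by norm_num) (le_of_not_gt hj))),
              Nat.testBit_eq_false_of_lt (lt_of_lt_of_le hz₀k (Nat.pow_le_pow_right (by norm_num) (le_of_not_gt hj)))]
        obtain ⟨j₀, hj₀⟩ := hne
        have hsum : (1 : ℝ) ≤ ∑ j : Fin k,
            (bitR (z : ℕ) j + (1 - 2 * bitR (z : ℕ) j) * bitR (z₀ : ℕ) j) := by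
          have h1 : (bitR (z : ℕ) j₀ + (1 - 2 * bitR (z : ℕ) j₀) * bitR (z₀ : ℕ) j₀) = 1 := by
            rw [hterm]; simp [hj₀]
          calc (1 : ℝ) = _ := h1.symm
            _ ≤ _ := Finset.single_le_sum (f := fun j : Fin k =>
                bitR (z : ℕ) j + (1 - 2 * bitR (z : ℕ) j) * bitR (z₀ : ℕ) j)
                (fun j _ => by rw [hterm]; split <;> norm_num) (Finset.mem_univ j₀)
        have := hM z₀ z
        nlinarith [mul_le_mul_of_nonneg_left hsum hM0]
    · intro z hzn hzk
      have hne : ∃ j : Fin k, Nat.testBit z j ≠ Nat.testBit (z₀ : ℕ) j := by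
        by_contra hc
        push_neg at hc
        have : z = (z₀ : ℕ) := by
          apply Nat.eq_of_testBit_eq
          intro j
          by_cases hj : j < k
          · exact hc ⟨j, hj⟩
          · have hz₀k : (z₀ : ℕ) < 2 ^ k := lt_of_lt_of_le z₀.isLt hnk
            rw [Nat.testBit_eq_false_of_lt (lt_of_lt_of_le hzk (Nat.pow_le_pow_right (by norm_num) (le_of_not_gt hj))),
              Nat.testBit_eq_false_of_lt (lt_of_lt_of_le hz₀k (Nat.pow_le_pow_right (by norm_num) (le_of_not_gt hj)))]
        omega
      obtain ⟨j₀, hj₀⟩ := hne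
      have h1 : (bitR z j₀ + (1 - 2 * bitR z j₀) * bitR (z₀ : ℕ) j₀) = 1 := by
        rw [hterm]; simp [hj₀]
      calc (1 : ℝ) = _ := h1.symm
        _ ≤ _ := Finset.single_le_sum (f := fun j : Fin k =>
            bitR z j + (1 - 2 * bitR z j) * bitR (z₀ : ℕ) j)
            (fun j _ => by rw [hterm]; split <;> norm_num) (Finset.mem_univ j₀)
  · rintro ⟨δ, hδ01, hub, hlb, hfree⟩
    obtain ⟨z₀, hz₀k, hz₀bit⟩ := exists_nat_of_bits k (fun j => if δ j = 1 then true else false)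
    have hδbit : ∀ j : Fin k, bitR z₀ j = δ j := by
      intro j
      unfold bitR
      rw [hz₀bit j]
      rcases hδ01 j with h | h <;> simp [h]
    have hsum0 : ∑ j : Fin k, (bitR z₀ j + (1 - 2 * bitR z₀ j) * δ j) = 0 := by
      apply Finset.sum_eq_zero
      intro j _
      rw [← hδbit j, hterm]
      simp
    have hz₀n : z₀ < n := by
      by_contra hc
      have := hfree z₀ (le_of_not_gt hc) hz₀k
      rw [hsum0] at this
      norm_num at this
    have hy_le : y ≤ x ⟨z₀, hz₀n⟩ := by
      have := hlb ⟨z₀, hz₀n⟩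
      simpa [hsum0] using this
    apply le_antisymm
    · exact hy_le.trans (Finset.le_sup' x (Finset.mem_univ _))
    · exact Finset.sup'_le _ _ fun z _ => hub z
end

section
/- Correctness of the instantiation-selection constraints (C₃–C₄): let D be a finite set (Finset) of vectors in Fin m → ℝ, δ : (Fin m → ℝ) → ℝ a function with (δ d = 0 or δ d = 1) for every d ∈ D and Σ_{d ∈ D} δ d = 1, and λ : Fin m → ℝ a vector satisfying, for every coordinate j, Σ_{d ∈ D} (d j)·(δ d) = λ j. Then for every d ∈ D: δ d = 1 if and only if λ = d. -/
/-- Correctness of the instantiation-selection constraints (C₃–C₄). -/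
theorem instantiation_selection_correct (m : ℕ) (D : Finset (Fin m → ℝ))
    (δ : (Fin m → ℝ) → ℝ) (hδ : ∀ d ∈ D, δ d = 0 ∨ δ d = 1)
    (hsum : ∑ d ∈ D, δ d = 1)
    (lam : Fin m → ℝ) (hlam : ∀ j, ∑ d ∈ D, d j * δ d = lam j) :
    ∀ d ∈ D, (δ d = 1 ↔ lam = d) := by
  -- auxiliary: if δ d = 1 then all other δ e = 0
  have key : ∀ d ∈ D, δ d = 1 → ∀ e ∈ D, e ≠ d → δ e = 0 := by
    intro d hd hd1 e he hne
    have hsplit : ∑ x ∈ D, δ x = δ d + ∑ x ∈ D.erase d, δ x :=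
      (Finset.add_sum_erase D δ hd).symm
    have hzero : ∑ x ∈ D.erase d, δ x = 0 := by
      have := hsum; rw [hsplit, hd1] at this; linarith
    have hnn : ∀ x ∈ D.erase d, 0 ≤ δ x := by
      intro x hx
      rcases hδ x (Finset.mem_of_mem_erase hx) with h | h <;> simp [h]
    have := (Finset.sum_eq_zero_iff_of_nonneg hnn).mp hzero
    exact this e (Finset.mem_erase.mpr ⟨hne, he⟩)
  have fwd : ∀ d ∈ D, δ d = 1 → lam = d := by
    intro d hd hd1
    funext j
    rw [← hlam j]
    rw [Finset.sum_eq_single_of_mem d hd]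
    · rw [hd1]; ring
    · intro e he hne
      rw [key d hd hd1 e he hne]; ring
  intro d hd
  constructor
  · exact fwd d hd
  · intro hld
    by_contra h1
    have hd0 : δ d = 0 := (hδ d hd).resolve_right h1
    have : ∃ e ∈ D, δ e ≠ 0 := by
      by_contra hall
      push_neg at hall
      have : ∑ x ∈ D, δ x = 0 := Finset.sum_eq_zero hall
      rw [hsum] at this; linarith
    obtain ⟨e, he, hene⟩ := this
    have he1 : δ e = 1 := (hδ e he).resolve_left hene
    have : lam = e := fwd e he he1
    have : d = e := hld ▸ this
    rw [this] at hd0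
    rw [hd0] at he1; linarith
end

section
/- Exactness of the misclassification encoding (C₁₉–C₂₀): let c ≥ 1 and k be natural numbers with c ≤ 2^k, v : Fin c → ℝ a vector of output activations, l : Fin c a label, and M ∈ ℝ with M ≥ v i − v j for all i, j. Writing bitⱼ(z) = 1 if Nat.testBit z j is true and 0 otherwise, and identifying z : Fin c with its underlying natural number, the following are equivalent: (a) there exists j : Fin c with j ≠ l and v l ≤ v j; (b) there exists δ : Fin k → ℝ with (δ j = 0 or δ j = 1) for every j such that: for every z : Fin c with z ≠ l, v l ≤ v z + M · Σⱼ (bitⱼ(z) + (1 − 2·bitⱼ(z))·δ j); Σⱼ (bitⱼ(l) + (1 − 2·bitⱼ(l))·δ j) ≥ 1; and for every natural number z with c ≤ z < 2^k, Σⱼ (bitⱼ(z) + (1 − 2·bitⱼ(z))·δ j) ≥ 1. -/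
lemma bitR_term (z n j : ℕ) :
    bitR z j + (1 - 2 * bitR z j) * bitR n j
      = if Nat.testBit z j = Nat.testBit n j then 0 else 1 := by
  unfold bitR
  cases hz : Nat.testBit z j <;> cases hn : Nat.testBit n j <;> simp <;> ring

lemma mismatch_nonneg (z n k : ℕ) :
    (0:ℝ) ≤ ∑ j : Fin k, (bitR z j + (1 - 2 * bitR z j) * bitR n j) := by
  apply Finset.sum_nonneg
  intro j _
  rw [bitR_term]
  split <;> norm_num

lemma mismatch_self (z k : ℕ) :
    ∑ j : Fin k, (bitR z j + (1 - 2 * bitR z j) * bitR z j) = 0 := by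
  apply Finset.sum_eq_zero
  intro j _
  rw [bitR_term]
  simp

lemma mismatch_ge_one {z n k : ℕ} (hz : z < 2 ^ k) (hn : n < 2 ^ k) (hne : z ≠ n) :
    (1:ℝ) ≤ ∑ j : Fin k, (bitR z j + (1 - 2 * bitR z j) * bitR n j) := by
  obtain ⟨i, hi⟩ := Nat.exists_testBit_ne_of_ne hne
  have hik : i < k := by
    by_contra h
    push_neg at h
    have h2 : 2 ^ k ≤ 2 ^ i := Nat.pow_le_pow_right (by norm_num) h
    rw [Nat.testBit_lt_two_pow (lt_of_lt_of_le hz h2),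
        Nat.testBit_lt_two_pow (lt_of_lt_of_le hn h2)] at hi
    exact hi rfl
  calc (1:ℝ) = bitR z i + (1 - 2 * bitR z i) * bitR n i := by
        rw [bitR_term]; simp [hi]
    _ ≤ _ := by
        apply Finset.single_le_sum (f := fun j : Fin k =>
          bitR z j + (1 - 2 * bitR z j) * bitR n j) (a := ⟨i, hik⟩)
        · intro j _
          rw [bitR_term]; split <;> norm_num
        · exact Finset.mem_univ _

/-- The number with bits `b 0, ..., b (k-1)`. -/
def ofBitsN (b : ℕ → Bool) (k : ℕ) : ℕ :=
  ∑ j ∈ Finset.range k, cond (b j) (2 ^ j) 0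

lemma ofBitsN_lt (b : ℕ → Bool) (k : ℕ) : ofBitsN b k < 2 ^ k := by
  induction k with
  | zero => simp [ofBitsN]
  | succ k ih =>
    rw [ofBitsN, Finset.sum_range_succ]
    have : cond (b k) (2 ^ k) 0 ≤ 2 ^ k := by cases b k <;> simp
    calc ofBitsN b k + cond (b k) (2 ^ k) 0 < 2 ^ k + 2 ^ k := by
          exact Nat.add_lt_add_of_lt_of_le ih this
      _ = 2 ^ (k + 1) := by ring

lemma ofBitsN_testBit (b : ℕ → Bool) (k : ℕ) {j : ℕ} (hj : j < k) :
    (ofBitsN b k).testBit j = b j := by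
  induction k with
  | zero => omega
  | succ k ih =>
    have hsplit : ofBitsN b (k+1) = ofBitsN b k + cond (b k) (2 ^ k) 0 :=
      Finset.sum_range_succ _ _
    rw [hsplit]
    rcases Nat.lt_or_ge j k with hjk | hjk
    · cases hbk : b k
      · simpa [hbk] using ih hjk
      · simp only [hbk, cond_true]
        rw [Nat.add_comm, Nat.testBit_two_pow_add_gt hjk]
        exact ih hjk
    · have hjeq : j = k := by omega
      subst hjeq
      have hfalse : (ofBitsN b j).testBit j = false :=
        Nat.testBit_lt_two_pow (ofBitsN_lt b j)
      cases hbk : b j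
      · simpa [hbk] using hfalse
      · simp only [hbk, cond_true]
        rw [Nat.add_comm, Nat.testBit_two_pow_add_eq, hfalse]
        rfl

/-- Exactness of the misclassification encoding (C₁₉–C₂₀). -/
theorem misclassification_encoding_exact (c k : ℕ) (hc : 1 ≤ c)
    (hck : c ≤ 2 ^ k) (v : Fin c → ℝ) (l : Fin c) (M : ℝ)
    (hM : ∀ i j, M ≥ v i - v j) :
    (∃ j : Fin c, j ≠ l ∧ v l ≤ v j) ↔
      ∃ δ : Fin k → ℝ, (∀ j, δ j = 0 ∨ δ j = 1) ∧
        (∀ z : Fin c, z ≠ l →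
          v l ≤ v z + M * ∑ j : Fin k, (bitR (z : ℕ) j + (1 - 2 * bitR (z : ℕ) j) * δ j)) ∧
        (1 ≤ ∑ j : Fin k, (bitR (l : ℕ) j + (1 - 2 * bitR (l : ℕ) j) * δ j)) ∧
        (∀ z : ℕ, c ≤ z → z < 2 ^ k →
          1 ≤ ∑ j : Fin k, (bitR z j + (1 - 2 * bitR z j) * δ j)) := by
  have hM0 : 0 ≤ M := by have := hM l l; linarith
  constructor
  · rintro ⟨j₀, hj₀ne, hj₀le⟩
    refine ⟨fun j => bitR (j₀ : ℕ) j, ?_, ?_, ?_, ?_⟩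
    · intro j
      simp only [bitR]
      split <;> simp
    · intro z hz
      by_cases hzj : z = j₀
      · subst hzj
        rw [mismatch_self]
        linarith
      · have h1 : (1:ℝ) ≤ ∑ j : Fin k,
            (bitR (z : ℕ) j + (1 - 2 * bitR (z : ℕ) j) * bitR (j₀ : ℕ) j) :=
          mismatch_ge_one (lt_of_lt_of_le z.isLt hck) (lt_of_lt_of_le j₀.isLt hck)
            (fun h => hzj (Fin.ext h))
        have := hM l z
        nlinarith
    · have h1 : (1:ℝ) ≤ ∑ j : Fin k,
          (bitR (l : ℕ) j + (1 - 2 * bitR (l : ℕ) j) * bitR (j₀ : ℕ) j) :=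
        mismatch_ge_one (lt_of_lt_of_le l.isLt hck) (lt_of_lt_of_le j₀.isLt hck)
          (fun h => hj₀ne (Fin.ext h.symm))
      exact h1
    · intro z hcz hzk
      exact mismatch_ge_one hzk (lt_of_lt_of_le j₀.isLt hck)
        (by have := j₀.isLt; omega)
  · rintro ⟨δ, hδ01, hC19, hCl, hChigh⟩
    classical
    set b : ℕ → Bool := fun j => if h : j < k then (if δ ⟨j, h⟩ = 1 then true else false)
      else false with hb
    set n : ℕ := ofBitsN b k with hn
    have hnlt : n < 2 ^ k := ofBitsN_lt b k
    have hδbit : ∀ j : Fin k, δ j = bitR n j := by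
      intro j
      have htb : n.testBit j = b j := ofBitsN_testBit b k j.isLt
      unfold bitR
      rw [htb, hb]
      simp only [j.isLt, dif_pos]
      rcases hδ01 j with h0 | h1
      · simp [h0]
      · simp [h1]
    have hsum : ∀ z : ℕ, ∑ j : Fin k, (bitR z j + (1 - 2 * bitR z j) * δ j)
        = ∑ j : Fin k, (bitR z j + (1 - 2 * bitR z j) * bitR n j) := by
      intro z
      exact Finset.sum_congr rfl fun j _ => by rw [hδbit j]
    have hnc : n < c := by
      by_contra h
      push_neg at h
      have := hChigh n h hnlt
      rw [hsum, mismatch_self] at this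
      linarith
    have hnl : (⟨n, hnc⟩ : Fin c) ≠ l := by
      intro h
      have hl : (l : ℕ) = n := by rw [← h]
      have := hCl
      rw [hsum, hl, mismatch_self] at this
      linarith
    refine ⟨⟨n, hnc⟩, hnl, ?_⟩
    have := hC19 ⟨n, hnc⟩ hnl
    rw [hsum, mismatch_self] at this
    simpa using this
end

section
/- Soundness and completeness of the MILP verification of local robustness for a one-hidden-layer ReLU classifier (Theorem 1 specialized to fully connected layers): let W₁ be a real h × n matrix with bias b₁ : Fin h → ℝ, W₂ a real c × h matrix (c ≥ 1) with bias b₂ : Fin c → ℝ, defining the network output f(x) i = (W₂.mulVec (fun j => max 0 ((W₁.mulVec x) j + b₁ j))) i + b₂ i; let the input domain be the linearly definable set P = {x : Fin n → ℝ | ∀ r, (A.mulVec x) r ≤ d r} for a real p × n matrix A and d : Fin p → ℝ; let l : Fin c be a label, k a natural number with c ≤ 2^k, and M ∈ ℝ such that for every x ∈ P: |(W₁.mulVec x) j + b₁ j| ≤ M for all j, and f(x) i − f(x) j ≤ M for all i, j. Then the following are equivalent: (a) for every x ∈ P and every j ≠ l, f(x) j < f(x) l; (b) there do NOT exist x : Fin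 n → ℝ, y : Fin h → ℝ, δ : Fin h → ℝ, δ' : Fin k → ℝ satisfying all of: (∀ r, (A.mulVec x) r ≤ d r); for every j, (δ j = 0 or δ j = 1), y j ≥ 0, y j ≥ (W₁.mulVec x) j + b₁ j, y j ≤ (W₁.mulVec x) j + b₁ j + M·(δ j), y j ≤ M·(1 − δ j); (∀ j, δ' j = 0 or δ' j = 1); for every z : Fin c with z ≠ l, (W₂.mulVec y) l + b₂ l ≤ (W₂.mulVec y) z + b₂ z + M · Σⱼ (bitⱼ(z) + (1 − 2·bitⱼ(z))·δ' j); Σⱼ (bitⱼ(l) + (1 − 2·bitⱼ(l))·δ' j) ≥ 1; and for every natural number z with c ≤ z < 2^k, Σⱼ (bitⱼ(z) + (1 − 2·bitⱼ(z))·δ' j) ≥ 1. -/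
lemma bitR_term_eq (z j : ℕ) (r : ℝ) (hr : r = 0 ∨ r = 1) :
    bitR z j + (1 - 2 * bitR z j) * r = if bitR z j = r then 0 else 1 := by
  rcases hr with h | h <;> subst h <;> unfold bitR <;> split <;> norm_num

lemma bitR_term_nonneg (z j : ℕ) (r : ℝ) (hr : r = 0 ∨ r = 1) :
    0 ≤ bitR z j + (1 - 2 * bitR z j) * r := by
  rw [bitR_term_eq z j r hr]; split <;> norm_num

lemma sum_bits_self (k w : ℕ) :
    (∑ j : Fin k, (bitR w (j : ℕ) + (1 - 2 * bitR w (j : ℕ)) * bitR w (j : ℕ))) = 0 := by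
  apply Finset.sum_eq_zero
  intro j _
  rw [bitR_term_eq _ _ _ (by unfold bitR; split <;> simp)]
  simp

lemma sum_bits_ge_one (k z w : ℕ) (hz : z < 2 ^ k) (hw : w < 2 ^ k) (hne : z ≠ w) :
    1 ≤ ∑ j : Fin k, (bitR z (j : ℕ) + (1 - 2 * bitR z (j : ℕ)) * bitR w (j : ℕ)) := by
  -- find a mismatched bit below k
  have hex : ∃ j : Fin k, Nat.testBit z (j : ℕ) ≠ Nat.testBit w (j : ℕ) := by
    by_contra hcon
    push_neg at hcon
    apply hne
    apply Nat.eq_of_testBit_eq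
    intro i
    by_cases hik : i < k
    · exact hcon ⟨i, hik⟩
    · have h1 : Nat.testBit z i = false :=
        Nat.testBit_lt_two_pow (lt_of_lt_of_le hz (Nat.pow_le_pow_right (by norm_num) (le_of_not_gt hik)))
      have h2 : Nat.testBit w i = false :=
        Nat.testBit_lt_two_pow (lt_of_lt_of_le hw (Nat.pow_le_pow_right (by norm_num) (le_of_not_gt hik)))
      rw [h1, h2]
  obtain ⟨j, hj⟩ := hex
  have hterm : bitR z (j : ℕ) + (1 - 2 * bitR z (j : ℕ)) * bitR w (j : ℕ) = 1 := by
    rw [bitR_term_eq _ _ _ (by unfold bitR; split <;> simp)]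
    rw [if_neg]
    unfold bitR
    cases hzz : Nat.testBit z (j : ℕ) <;> cases hww : Nat.testBit w (j : ℕ) <;>
      simp_all <;> norm_num
  calc (1 : ℝ) = bitR z (j : ℕ) + (1 - 2 * bitR z (j : ℕ)) * bitR w (j : ℕ) := hterm.symm
    _ ≤ _ := Finset.single_le_sum
        (f := fun i : Fin k => bitR z (i : ℕ) + (1 - 2 * bitR z (i : ℕ)) * bitR w (i : ℕ))
        (fun i _ => bitR_term_nonneg z (i : ℕ) _ (by unfold bitR; split <;> simp))
        (Finset.mem_univ j)

/-- From a 0/1-valued vector `δ'` on `Fin k`, produce the natural number with those bits. -/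
lemma exists_nat_bits : ∀ (k : ℕ) (δ' : Fin k → ℝ), (∀ j, δ' j = 0 ∨ δ' j = 1) →
    ∃ w : ℕ, w < 2 ^ k ∧ ∀ j : Fin k, δ' j = bitR w (j : ℕ) := by
  intro k
  induction k with
  | zero => intro δ' _; exact ⟨0, by norm_num, fun j => j.elim0⟩
  | succ m ih =>
    intro δ' hδ
    obtain ⟨w', hw', hbits⟩ := ih (fun j => δ' j.succ) (fun j => hδ j.succ)
    set b : ℕ := if δ' 0 = 1 then 1 else 0 with hb
    have hb2 : b < 2 := by rw [hb]; split <;> norm_num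
    refine ⟨2 * w' + b, ?_, ?_⟩
    · have : 2 * w' + b < 2 * w' + 2 := by omega
      calc 2 * w' + b < 2 * (w' + 1) := by omega
        _ ≤ 2 * 2 ^ m := by omega
        _ = 2 ^ (m + 1) := by ring
    · intro j
      refine Fin.cases ?_ ?_ j
      · unfold bitR
        rw [show ((0 : Fin (m+1)) : ℕ) = 0 from rfl, Nat.testBit_zero]
        have hmod : (2 * w' + b) % 2 = b := by omega
        rw [hmod]
        rcases hδ 0 with h0 | h0 <;> rw [h0] <;> simp [hb, h0] <;> norm_num
      · intro i
        have : ((i.succ : Fin (m+1)) : ℕ) = (i : ℕ) + 1 := rfl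
        unfold bitR
        rw [this, Nat.testBit_succ]
        have hdiv : (2 * w' + b) / 2 = w' := by omega
        rw [hdiv]
        have := hbits i
        unfold bitR at this
        exact this

/-- Soundness and completeness of the MILP verification of local robustness
for a one-hidden-layer ReLU classifier. -/
theorem milp_local_robustness (n h c p k : ℕ) (hc : 1 ≤ c) (hck : c ≤ 2 ^ k)
    (W₁ : Matrix (Fin h) (Fin n) ℝ) (b₁ : Fin h → ℝ)
    (W₂ : Matrix (Fin c) (Fin h) ℝ) (b₂ : Fin c → ℝ)
    (A : Matrix (Fin p) (Fin n) ℝ) (d : Fin p → ℝ)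
    (l : Fin c) (M : ℝ)
    (f : (Fin n → ℝ) → Fin c → ℝ)
    (hf : ∀ x i, f x i =
      W₂.mulVec (fun j => max 0 (W₁.mulVec x j + b₁ j)) i + b₂ i)
    (hM₁ : ∀ x : Fin n → ℝ, (∀ r, A.mulVec x r ≤ d r) →
      ∀ j, |W₁.mulVec x j + b₁ j| ≤ M)
    (hM₂ : ∀ x : Fin n → ℝ, (∀ r, A.mulVec x r ≤ d r) →
      ∀ i j, f x i - f x j ≤ M) :
    (∀ x : Fin n → ℝ, (∀ r, A.mulVec x r ≤ d r) →
        ∀ j : Fin c, j ≠ l → f x j < f x l) ↔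
      ¬ ∃ (x : Fin n → ℝ) (y : Fin h → ℝ) (δ : Fin h → ℝ) (δ' : Fin k → ℝ),
        (∀ r, A.mulVec x r ≤ d r) ∧
        (∀ j,
          (δ j = 0 ∨ δ j = 1) ∧
          y j ≥ 0 ∧
          y j ≥ W₁.mulVec x j + b₁ j ∧
          y j ≤ W₁.mulVec x j + b₁ j + M * δ j ∧
          y j ≤ M * (1 - δ j)) ∧
        (∀ j, δ' j = 0 ∨ δ' j = 1) ∧
        (∀ z : Fin c, z ≠ l →
          W₂.mulVec y l + b₂ l ≤ W₂.mulVec y z + b₂ z +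
            M * ∑ j : Fin k, (bitR (z : ℕ) j + (1 - 2 * bitR (z : ℕ) j) * δ' j)) ∧
        (1 ≤ ∑ j : Fin k, (bitR (l : ℕ) j + (1 - 2 * bitR (l : ℕ) j) * δ' j)) ∧
        (∀ z : ℕ, c ≤ z → z < 2 ^ k →
          1 ≤ ∑ j : Fin k, (bitR z j + (1 - 2 * bitR z j) * δ' j)) := by
  constructor
  · -- robust → no MILP solution
    rintro hrob ⟨x, y, δ, δ', hx, hrelu, hδ', hmis, hl, hrange⟩
    obtain ⟨w, hwlt, hwbits⟩ := exists_nat_bits k δ' hδ'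
    -- rewrite sums in terms of bits of w
    have hSw : (∑ j : Fin k, (bitR w (j : ℕ) + (1 - 2 * bitR w (j : ℕ)) * δ' j)) = 0 := by
      rw [show (∑ j : Fin k, (bitR w (j : ℕ) + (1 - 2 * bitR w (j : ℕ)) * δ' j))
          = ∑ j : Fin k, (bitR w (j : ℕ) + (1 - 2 * bitR w (j : ℕ)) * bitR w (j : ℕ)) from
        Finset.sum_congr rfl (fun j _ => by rw [hwbits j])]
      exact sum_bits_self k w
    -- w < c
    have hwc : w < c := by
      by_contra hcon
      have := hrange w (le_of_not_gt hcon) hwlt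
      rw [hSw] at this
      norm_num at this
    set z₀ : Fin c := ⟨w, hwc⟩ with hz₀
    -- z₀ ≠ l
    have hz₀l : z₀ ≠ l := by
      intro he
      have hlw : (l : ℕ) = w := by rw [← he]
      rw [hlw, hSw] at hl
      norm_num at hl
    -- y is the ReLU output
    have hy : y = fun j => max 0 (W₁.mulVec x j + b₁ j) := by
      funext j
      obtain ⟨hδj, hy0, hya, hyub1, hyub2⟩ := hrelu j
      rcases hδj with h0 | h1
      · rw [h0] at hyub1
        have hya' : y j = W₁.mulVec x j + b₁ j := le_antisymm (by linarith) hya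
        rw [hya']
        exact (max_eq_right (by linarith)).symm
      · rw [h1] at hyub2
        have hy0' : y j = 0 := le_antisymm (by linarith) hy0
        rw [hy0']
        exact (max_eq_left (by linarith)).symm
    have hmis' := hmis z₀ hz₀l
    have hSz₀ : (∑ j : Fin k, (bitR ((z₀ : Fin c) : ℕ) (j : ℕ)
        + (1 - 2 * bitR ((z₀ : Fin c) : ℕ) (j : ℕ)) * δ' j)) = 0 := by
      simpa [hz₀] using hSw
    rw [hSz₀] at hmis'
    rw [hy] at hmis'
    rw [← hf x l, ← hf x z₀] at hmis'
    have := hrob x hx z₀ hz₀l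
    linarith
  · -- no MILP solution → robust
    intro hns x hx j hj
    by_contra hle
    push_neg at hle
    apply hns
    have hM0 : 0 ≤ M := by have := hM₂ x hx l l; linarith
    refine ⟨x, fun i => max 0 (W₁.mulVec x i + b₁ i),
      fun i => if W₁.mulVec x i + b₁ i < 0 then 1 else 0,
      fun i => bitR (j : ℕ) (i : ℕ), hx, ?_, ?_, ?_, ?_, ?_⟩
    · intro i
      beta_reduce
      have habs := abs_le.mp (hM₁ x hx i)
      by_cases hneg : W₁.mulVec x i + b₁ i < 0
      · refine ⟨Or.inr (by rw [if_pos hneg]), le_max_left _ _, le_max_right _ _, ?_, ?_⟩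
        · rw [if_pos hneg, max_eq_left (le_of_lt hneg)]; linarith [habs.1]
        · rw [if_pos hneg, max_eq_left (le_of_lt hneg)]; norm_num
      · push_neg at hneg
        refine ⟨Or.inl (by rw [if_neg (not_lt.mpr hneg)]), le_max_left _ _,
          le_max_right _ _, ?_, ?_⟩
        · rw [if_neg (not_lt.mpr hneg), max_eq_right hneg]; linarith
        · rw [if_neg (not_lt.mpr hneg), max_eq_right hneg]; linarith [habs.2]
    · intro i; beta_reduce; unfold bitR; split <;> simp
    · intro z hz
      rw [← hf x l, ← hf x z]
      by_cases hzj : z = j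
      · subst hzj
        have : (∑ i : Fin k, (bitR ((z : Fin c) : ℕ) (i : ℕ)
            + (1 - 2 * bitR ((z : Fin c) : ℕ) (i : ℕ)) * bitR ((z : Fin c) : ℕ) (i : ℕ))) = 0 :=
          sum_bits_self k (z : ℕ)
        rw [this]
        linarith
      · have hzn : (z : ℕ) ≠ (j : ℕ) := fun he => hzj (Fin.ext he)
        have hS := sum_bits_ge_one k (z : ℕ) (j : ℕ)
          (lt_of_lt_of_le z.isLt hck) (lt_of_lt_of_le j.isLt hck) hzn
        have hMfz := hM₂ x hx l z
        nlinarith [hS, hMfz, hM0]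
    · exact sum_bits_ge_one k (l : ℕ) (j : ℕ)
        (lt_of_lt_of_le l.isLt hck) (lt_of_lt_of_le j.isLt hck)
        (fun he => hj (Fin.ext he.symm))
    · intro z hcz hzk
      exact sum_bits_ge_one k z (j : ℕ) hzk (lt_of_lt_of_le j.isLt hck)
        (fun he => by have := j.isLt; omega)
end
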